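/- Let f(z) = z + Σ_{n≥2} aₙzⁿ be a bi-starlike function of order β, i.e. f ∈ M^0_σ(β), with 0 ≤ β ≤ 1 − (3 + √89)/16. Then |a₂a₄ − a₃²| ≤ 4(1−β)²[4(1−β)² + 1]/3. -/

import Mathlib

open Complex Metric intervalIntegral Real Filter Topology

noncomputable def scalarSeries (a : ℕ → ℂ) : FormalMultilinearSeries ℂ ℂ ℂ :=
  fun n => ContinuousMultilinearMap.mkPiRing ℂ (Fin n) (a n)

@[simp] lemma scalarSeries_coeff (a : ℕ → ℂ) (n : ℕ) : (scalarSeries a).coeff n = a n := by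
  simp [scalarSeries, FormalMultilinearSeries.coeff]

lemma hasFPowerSeriesAt_scalarSeries {F : ℂ → ℂ} {a : ℕ → ℂ}
    (h : ∀ᶠ y in nhds (0:ℂ), HasSum (fun n => a n * y ^ n) (F y)) :
    HasFPowerSeriesAt F (scalarSeries a) 0 := by
  rw [hasFPowerSeriesAt_iff]
  filter_upwards [h] with y hy
  simpa [smul_eq_mul, mul_comm] using hy

lemma circleMap_pow (ρ θ : ℝ) (n : ℕ) :
    (circleMap 0 ρ θ) ^ n = (ρ:ℂ)^n * Complex.exp ((n:ℂ) * θ * Complex.I) := by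
  rw [circleMap_zero, mul_pow, ← Complex.exp_nat_mul]
  ring_nf

lemma claimA (F : ℂ → ℂ) (ρ : ℝ) (hρ : 0 < ρ) (n : ℕ) :
    ∫ θ in (0:ℝ)..2*π, F (circleMap 0 ρ θ) * Complex.exp (-(n:ℂ) * θ * Complex.I)
      = (2*π) * (ρ:ℂ)^n * (cauchyPowerSeries F 0 ρ).coeff n := by
  have hcoeff : (cauchyPowerSeries F 0 ρ).coeff n
      = (2 * ↑π * Complex.I : ℂ)⁻¹ • ∮ z in C(0, ρ), (z - 0)⁻¹ ^ n • (z - 0)⁻¹ • F z := by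
    simp [cauchyPowerSeries, FormalMultilinearSeries.coeff,
      ContinuousMultilinearMap.mkPiRing_apply]
  have hne : ∀ θ : ℝ, circleMap 0 ρ θ ≠ 0 := fun θ => circleMap_ne_center hρ.ne'
  have hint : (∮ z in C(0, ρ), (z - 0)⁻¹ ^ n • (z - 0)⁻¹ • F z)
      = Complex.I * ((ρ:ℂ)^n)⁻¹ * ∫ θ in (0:ℝ)..2*π,
          F (circleMap 0 ρ θ) * Complex.exp (-(n:ℂ) * θ * Complex.I) := by
    rw [circleIntegral, ← intervalIntegral.integral_const_mul]
    refine intervalIntegral.integral_congr fun θ _ => ?_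
    have hz := hne θ
    have hzn : (circleMap 0 ρ θ) ^ n ≠ 0 := pow_ne_zero _ hz
    have hpow := circleMap_pow ρ θ n
    have hρn : ((ρ:ℂ)^n) ≠ 0 := pow_ne_zero _ (by exact_mod_cast hρ.ne')
    have hexp : Complex.exp (-(n:ℂ) * θ * Complex.I)
        = ((ρ:ℂ)^n) * ((circleMap 0 ρ θ) ^ n)⁻¹ := by
      rw [hpow, mul_inv, ← Complex.exp_neg, ← mul_assoc, mul_inv_cancel₀ hρn, one_mul]
      ring_nf
    rw [deriv_circleMap]
    simp only [sub_zero, smul_eq_mul, inv_pow]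
    rw [hexp]
    field_simp
  rw [hcoeff, hint, smul_eq_mul]
  have hπ : (π:ℂ) ≠ 0 := by exact_mod_cast Real.pi_ne_zero
  have hρn : ((ρ:ℂ)^n) ≠ 0 := pow_ne_zero _ (by exact_mod_cast hρ.ne')
  field_simp [Complex.I_ne_zero]
  congr 1
  funext θ
  ring_nf

lemma claimB (F : ℂ → ℂ) (ρ : ℝ) (hρ : 0 < ρ)
    (hF : ContinuousOn F (closedBall 0 ρ))
    (hd : ∀ z ∈ ball (0:ℂ) ρ, DifferentiableAt ℂ F z)
    (n : ℕ) (hn : 1 ≤ n) :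
    ∫ θ in (0:ℝ)..2*π, F (circleMap 0 ρ θ) * Complex.exp ((n:ℂ) * θ * Complex.I) = 0 := by
  have hzero : (∮ z in C(0, ρ), F z * z ^ (n-1)) = 0 := by
    refine circleIntegral_eq_zero_of_differentiable_on_off_countable hρ.le
      Set.countable_empty (hF.mul ((continuous_pow _).continuousOn)) fun z hz => ?_
    exact (hd z hz.1).mul (differentiableAt_pow _)
  have hρn : ((ρ:ℂ)^n) ≠ 0 := pow_ne_zero _ (by exact_mod_cast hρ.ne')
  have : (∮ z in C(0, ρ), F z * z ^ (n-1))
      = (Complex.I * (ρ:ℂ)^n) * ∫ θ in (0:ℝ)..2*π,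
          F (circleMap 0 ρ θ) * Complex.exp ((n:ℂ) * θ * Complex.I) := by
    rw [circleIntegral, ← intervalIntegral.integral_const_mul]
    refine intervalIntegral.integral_congr fun θ _ => ?_
    rw [deriv_circleMap]
    have hzn : circleMap 0 ρ θ * (circleMap 0 ρ θ) ^ (n-1) = (circleMap 0 ρ θ) ^ n := by
      rw [← pow_succ']
      congr 1
      omega
    calc (circleMap 0 ρ θ * Complex.I) • (F (circleMap 0 ρ θ) * circleMap 0 ρ θ ^ (n-1))
        = (circleMap 0 ρ θ * circleMap 0 ρ θ ^ (n-1)) * Complex.I * F (circleMap 0 ρ θ) := by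
          simp only [smul_eq_mul]; ring
      _ = (Complex.I * (ρ:ℂ)^n) * (F (circleMap 0 ρ θ) * Complex.exp ((n:ℂ) * θ * Complex.I)) := by
          rw [hzn, circleMap_pow]; ring
  rw [this] at hzero
  rcases mul_eq_zero.1 hzero with h | h
  · exact absurd h (mul_ne_zero Complex.I_ne_zero hρn)
  · exact h

lemma coeff_bound (β : ℝ) (h : ℂ → ℂ) (c : FormalMultilinearSeries ℂ ℂ ℂ)
    (han : AnalyticOnNhd ℂ h (ball (0:ℂ) 1))
    (hc : HasFPowerSeriesAt h c 0) (h0 : h 0 = 1)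
    (hre : ∀ z ∈ ball (0:ℂ) 1, β ≤ (h z).re)
    (n : ℕ) (hn : 1 ≤ n) : ‖c.coeff n‖ ≤ 2*(1-β) := by
  have main : ∀ ρ : ℝ, 0 < ρ → ρ < 1 → (2*π*ρ^n) * ‖c.coeff n‖ ≤ 4*π*(1-β) := by
    intro ρ hρ hρ1
    have hsub : closedBall (0:ℂ) ρ ⊆ ball 0 1 := closedBall_subset_ball hρ1
    have hmem : ∀ θ : ℝ, circleMap 0 ρ θ ∈ ball (0:ℂ) 1 := by
      intro θ
      rw [mem_ball_zero_iff, norm_circleMap_zero, abs_of_pos hρ]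
      exact hρ1
    have hconth : ContinuousOn h (closedBall (0:ℂ) ρ) := (han.continuousOn).mono hsub
    have hdiffh : ∀ z ∈ ball (0:ℂ) ρ, DifferentiableAt ℂ h z := fun z hz =>
      (han z (hsub (ball_subset_closedBall hz))).differentiableAt
    have hdo : DifferentiableOn ℂ h (closedBall (0:ℂ) ((⟨ρ, hρ.le⟩ : NNReal) : ℝ)) := fun z hz =>
      (han z (hsub hz)).differentiableAt.differentiableWithinAt
    have hball := hdo.hasFPowerSeriesOnBall (R := ⟨ρ, hρ.le⟩) (by exact_mod_cast hρ)
    have hceq : c = cauchyPowerSeries h 0 ρ :=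
      hc.eq_formalMultilinearSeries hball.hasFPowerSeriesAt
    have hcc : Continuous fun θ : ℝ => h (circleMap 0 ρ θ) :=
      (han.continuousOn).comp_continuous (continuous_circleMap 0 ρ) hmem
    have hec : ∀ m : ℂ, Continuous fun θ : ℝ => Complex.exp (m * θ * Complex.I) := fun m =>
      Complex.continuous_exp.comp ((continuous_const.mul Complex.continuous_ofReal).mul
        continuous_const)
    have hA := claimA h ρ hρ n
    rw [← hceq] at hA
    have hA0 := claimA h ρ hρ 0
    rw [← hceq] at hA0
    have hc00 : c.coeff 0 = 1 := by
      have h1 := hc.coeff_zero (fun _ => 1)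
      rw [h0] at h1
      exact h1
    rw [hc00] at hA0
    simp only [Nat.cast_zero, neg_zero, zero_mul, Complex.exp_zero, mul_one, pow_zero] at hA0
    have hB := claimB h ρ hρ hconth hdiffh n hn
    have hB1 := claimB (fun _ => 1) ρ hρ continuousOn_const (fun z _ => differentiableAt_const 1)
      n hn
    simp only [one_mul] at hB1
    have hconj : ∀ θ : ℝ, (starRingEnd ℂ) (Complex.exp ((n:ℂ) * θ * Complex.I))
        = Complex.exp (-(n:ℂ) * θ * Complex.I) := by
      intro θ
      rw [← Complex.exp_conj]
      congr 1
      simp only [map_mul, Complex.conj_I, Complex.conj_ofReal, map_natCast]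
      ring
    have hC : ∫ θ in (0:ℝ)..2*π,
        (starRingEnd ℂ) (h (circleMap 0 ρ θ)) * Complex.exp (-(n:ℂ) * θ * Complex.I) = 0 := by
      have hint : IntervalIntegrable
          (fun θ : ℝ => h (circleMap 0 ρ θ) * Complex.exp ((n:ℂ) * θ * Complex.I))
          MeasureTheory.volume 0 (2*π) := (hcc.mul (hec _)).intervalIntegrable _ _
      have hcomm := Complex.conjCLE.toContinuousLinearMap.intervalIntegral_comp_comm hint
      simp only [ContinuousLinearEquiv.coe_coe, Complex.conjCLE_apply] at hcomm
      calc ∫ θ in (0:ℝ)..2*π,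
            (starRingEnd ℂ) (h (circleMap 0 ρ θ)) * Complex.exp (-(n:ℂ) * θ * Complex.I)
          = ∫ θ in (0:ℝ)..2*π, (starRingEnd ℂ)
              (h (circleMap 0 ρ θ) * Complex.exp ((n:ℂ) * θ * Complex.I)) := by
            refine intervalIntegral.integral_congr fun θ _ => ?_
            rw [map_mul, hconj]
        _ = (starRingEnd ℂ) (∫ θ in (0:ℝ)..2*π,
              h (circleMap 0 ρ θ) * Complex.exp ((n:ℂ) * θ * Complex.I)) := hcomm
        _ = 0 := by rw [hB, map_zero]
    have hD : ∫ θ in (0:ℝ)..2*π, Complex.exp (-(n:ℂ) * θ * Complex.I) = 0 := by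
      have hint : IntervalIntegrable (fun θ : ℝ => Complex.exp ((n:ℂ) * θ * Complex.I))
          MeasureTheory.volume 0 (2*π) := (hec _).intervalIntegrable _ _
      have hcomm := Complex.conjCLE.toContinuousLinearMap.intervalIntegral_comp_comm hint
      simp only [ContinuousLinearEquiv.coe_coe, Complex.conjCLE_apply] at hcomm
      calc ∫ θ in (0:ℝ)..2*π, Complex.exp (-(n:ℂ) * θ * Complex.I)
          = ∫ θ in (0:ℝ)..2*π, (starRingEnd ℂ) (Complex.exp ((n:ℂ) * θ * Complex.I)) := by
            refine intervalIntegral.integral_congr fun θ _ => (hconj θ).symm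
        _ = (starRingEnd ℂ) (∫ θ in (0:ℝ)..2*π, Complex.exp ((n:ℂ) * θ * Complex.I)) := hcomm
        _ = 0 := by rw [hB1, map_zero]
    -- key representation
    have hkey : ∫ θ in (0:ℝ)..2*π,
        ((2 * ((h (circleMap 0 ρ θ)).re - β) : ℝ) : ℂ) * Complex.exp (-(n:ℂ) * θ * Complex.I)
        = (2*π) * (ρ:ℂ)^n * c.coeff n := by
      have hsplit : ∀ θ : ℝ,
          ((2 * ((h (circleMap 0 ρ θ)).re - β) : ℝ) : ℂ) * Complex.exp (-(n:ℂ) * θ * Complex.I)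
          = h (circleMap 0 ρ θ) * Complex.exp (-(n:ℂ) * θ * Complex.I)
            + (starRingEnd ℂ) (h (circleMap 0 ρ θ)) * Complex.exp (-(n:ℂ) * θ * Complex.I)
            - (((2*β : ℝ)):ℂ) * Complex.exp (-(n:ℂ) * θ * Complex.I) := by
        intro θ
        rw [← add_mul, ← sub_mul]
        congr 1
        rw [Complex.add_conj]
        push_cast
        ring
      have i1 : IntervalIntegrable
          (fun θ : ℝ => h (circleMap 0 ρ θ) * Complex.exp (-(n:ℂ) * θ * Complex.I))
          MeasureTheory.volume 0 (2*π) := (hcc.mul (hec _)).intervalIntegrable _ _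
      have i2 : IntervalIntegrable
          (fun θ : ℝ => (starRingEnd ℂ) (h (circleMap 0 ρ θ))
            * Complex.exp (-(n:ℂ) * θ * Complex.I))
          MeasureTheory.volume 0 (2*π) :=
        ((continuous_star.comp hcc).mul (hec _)).intervalIntegrable _ _
      have i3 : IntervalIntegrable
          (fun θ : ℝ => (((2*β : ℝ)):ℂ) * Complex.exp (-(n:ℂ) * θ * Complex.I))
          MeasureTheory.volume 0 (2*π) := (continuous_const.mul (hec _)).intervalIntegrable _ _
      rw [intervalIntegral.integral_congr (g := fun θ : ℝ =>
          h (circleMap 0 ρ θ) * Complex.exp (-(n:ℂ) * θ * Complex.I)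
            + (starRingEnd ℂ) (h (circleMap 0 ρ θ)) * Complex.exp (-(n:ℂ) * θ * Complex.I)
            - (((2*β : ℝ)):ℂ) * Complex.exp (-(n:ℂ) * θ * Complex.I)) (fun θ _ => hsplit θ)]
      rw [intervalIntegral.integral_sub (i1.add i2) i3, intervalIntegral.integral_add i1 i2]
      rw [hA, hC, intervalIntegral.integral_const_mul, hD]
      ring
    -- estimate
    have hnn : ∀ θ : ℝ, 0 ≤ 2 * ((h (circleMap 0 ρ θ)).re - β) := by
      intro θ
      have := hre _ (hmem θ)
      linarith
    have hnorm : ‖∫ θ in (0:ℝ)..2*π,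
        ((2 * ((h (circleMap 0 ρ θ)).re - β) : ℝ) : ℂ) * Complex.exp (-(n:ℂ) * θ * Complex.I)‖
        ≤ ∫ θ in (0:ℝ)..2*π, 2 * ((h (circleMap 0 ρ θ)).re - β) := by
      refine (intervalIntegral.norm_integral_le_integral_norm
        (by positivity : (0:ℝ) ≤ 2*π)).trans_eq ?_
      refine intervalIntegral.integral_congr fun θ _ => ?_
      rw [norm_mul]
      have he1 : ‖Complex.exp (-(n:ℂ) * θ * Complex.I)‖ = 1 := by
        rw [Complex.norm_exp]
        simp
      rw [he1, mul_one, Complex.norm_real, Real.norm_eq_abs, _root_.abs_of_nonneg (hnn θ)]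
    have hRe : ∫ θ in (0:ℝ)..2*π, (h (circleMap 0 ρ θ)).re = 2*π := by
      have hint : IntervalIntegrable (fun θ : ℝ => h (circleMap 0 ρ θ))
          MeasureTheory.volume 0 (2*π) := hcc.intervalIntegrable _ _
      have hcomm := (Complex.reCLM.intervalIntegral_comp_comm hint).symm
      simp only [Complex.reCLM_apply] at hcomm
      rw [show (fun θ : ℝ => (h (circleMap 0 ρ θ)).re)
        = fun θ : ℝ => Complex.reCLM (h (circleMap 0 ρ θ)) from rfl]
      rw [Complex.reCLM.intervalIntegral_comp_comm hint, hA0]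
      simp
    have hRHS : ∫ θ in (0:ℝ)..2*π, 2 * ((h (circleMap 0 ρ θ)).re - β) = 4*π*(1-β) := by
      have hint : IntervalIntegrable (fun θ : ℝ => (h (circleMap 0 ρ θ)).re)
          MeasureTheory.volume 0 (2*π) :=
        (Complex.continuous_re.comp hcc).intervalIntegrable _ _
      have : (fun θ : ℝ => 2 * ((h (circleMap 0 ρ θ)).re - β))
          = fun θ : ℝ => 2 * (h (circleMap 0 ρ θ)).re - 2*β := by
        funext θ; ring
      rw [this, intervalIntegral.integral_sub ((hint.const_mul 2)) intervalIntegrable_const,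
        intervalIntegral.integral_const_mul, hRe, intervalIntegral.integral_const]
      simp
      ring
    have hLHS : ‖(2*(π:ℂ)) * (ρ:ℂ)^n * c.coeff n‖ = (2*π*ρ^n) * ‖c.coeff n‖ := by
      have : (2*(π:ℂ)) * (ρ:ℂ)^n * c.coeff n = ((2*π*ρ^n : ℝ) : ℂ) * c.coeff n := by
        push_cast
        ring
      rw [this, norm_mul, Complex.norm_real, Real.norm_eq_abs,
        abs_of_pos (by positivity)]
    rw [hkey] at hnorm
    rw [hLHS] at hnorm
    rw [hRHS] at hnorm
    exact hnorm
  -- pass to the limit ρ → 1⁻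
  have hlim : Filter.Tendsto (fun ρ : ℝ => 2*(1-β)/ρ^n) (nhdsWithin 1 (Set.Iio 1))
      (nhds (2*(1-β))) := by
    have h1 : Filter.Tendsto (fun ρ : ℝ => 2*(1-β)/ρ^n) (nhds 1) (nhds (2*(1-β)/1^n)) :=
      tendsto_const_nhds.div ((continuous_pow n).tendsto 1) (by norm_num)
    simpa using h1.mono_left nhdsWithin_le_nhds
  refine ge_of_tendsto hlim ?_
  filter_upwards [Ioo_mem_nhdsLT_of_mem (by constructor <;> norm_num : (1:ℝ) ∈ Set.Ioc 0 1)]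
    with ρ hρ
  obtain ⟨hρ0, hρ1⟩ := hρ
  have hm := main ρ hρ0 hρ1
  rw [le_div_iff₀ (by positivity)]
  nlinarith [Real.pi_pos]

/-- Second Hankel determinant bound for bi-starlike functions of order `β`
(case `α = 0`). -/
theorem second_hankel_bound_bistarlike
    (β : ℝ) (hβ0 : 0 ≤ β) (hβ : β ≤ 1 - (3 + Real.sqrt 89) / 16)
    (f g : ℂ → ℂ) (a : ℕ → ℂ) (ha0 : a 0 = 0) (ha1 : a 1 = 1)
    (hf : ∀ z ∈ Metric.ball (0 : ℂ) 1, HasSum (fun n : ℕ => a n * z ^ n) (f z))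
    (hf_an : AnalyticOn ℂ f (Metric.ball (0 : ℂ) 1))
    (hf_inj : Set.InjOn f (Metric.ball (0 : ℂ) 1))
    (r : ℝ) (hr : 0 < r)
    (hg_an : AnalyticOn ℂ g (Metric.ball (0 : ℂ) r))
    (hg_inj : Set.InjOn g (Metric.ball (0 : ℂ) r))
    (hgf : ∀ z ∈ Metric.ball (0 : ℂ) 1, g (f z) = z)
    (hRef : ∀ z ∈ Metric.ball (0 : ℂ) 1, z ≠ 0 →
      β ≤ (z * deriv f z / f z).re)
    (hReg : ∀ w ∈ Metric.ball (0 : ℂ) r, w ≠ 0 →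
      β ≤ (w * deriv g w / g w).re) :
    ‖a 2 * a 4 - (a 3) ^ 2‖ ≤
      4 * (1 - β) ^ 2 * (4 * (1 - β) ^ 2 + 1) / 3 := by
  have mem0 : (0:ℂ) ∈ ball (0:ℂ) 1 := by simp
  have hβ1 : β ≤ 1 := by
    have : 0 ≤ (3 + Real.sqrt 89) / 16 := by positivity
    linarith
  -- f 0 = 0
  have hf0 : f 0 = 0 := by
    have h1 := hf 0 mem0
    have h2 : HasSum (fun n : ℕ => a n * (0:ℂ) ^ n) (a 0 * (0:ℂ) ^ 0) :=
      hasSum_single 0 (fun j hj => by simp [zero_pow hj])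
    have := h1.unique h2
    simpa [ha0] using this
  have fan : AnalyticOnNhd ℂ f (ball (0:ℂ) 1) :=
    (Metric.isOpen_ball.analyticOn_iff_analyticOnNhd).1 hf_an
  have fnz : ∀ z ∈ ball (0:ℂ) 1, z ≠ 0 → f z ≠ 0 := by
    intro z hz hz0 hfz
    exact hz0 (hf_inj hz mem0 (by rw [hfz, hf0]))
  -- the function u = f z / z
  set u : ℂ → ℂ := fun z => if z = 0 then 1 else f z / z with hu_def
  have hu : ∀ z ∈ ball (0:ℂ) 1, HasSum (fun n => a (n+1) * z ^ n) (u z) := by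
    intro z hz
    by_cases hz0 : z = 0
    · subst hz0
      have h2 : HasSum (fun n : ℕ => a (n+1) * (0:ℂ) ^ n) (a 1 * (0:ℂ) ^ 0) :=
        hasSum_single 0 (fun j hj => by simp [zero_pow hj])
      simpa [hu_def, ha1] using h2
    · have h1 := hf z hz
      have h2 : HasSum (fun n : ℕ => a (n+1) * z ^ (n+1)) (f z) := by
        refine (hasSum_nat_add_iff (f := fun n : ℕ => a n * z ^ n) 1).2 ?_
        simpa [ha0] using h1
      have h3 := h2.mul_left z⁻¹
      have hfun : (fun n : ℕ => z⁻¹ * (a (n+1) * z ^ (n+1))) = fun n => a (n+1) * z ^ n := by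
        funext n
        rw [pow_succ]
        field_simp
      rw [hfun] at h3
      have hval : z⁻¹ * f z = u z := by
        simp [hu_def, hz0, div_eq_inv_mul]
      rwa [hval] at h3
  have hfu : ∀ z ∈ ball (0:ℂ) 1, f z = z * u z := by
    intro z hz
    by_cases hz0 : z = 0
    · simp [hz0, hf0]
    · simp [hu_def, hz0]
      rw [mul_div_cancel₀]
      exact hz0
  have hune : ∀ z ∈ ball (0:ℂ) 1, u z ≠ 0 := by
    intro z hz
    by_cases hz0 : z = 0
    · simp [hu_def, hz0]
    · simp only [hu_def, if_neg hz0]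
      exact div_ne_zero (fnz z hz hz0) hz0
  -- u is analytic on the ball
  have hqAt : HasFPowerSeriesAt u (scalarSeries (fun n => a (n+1))) 0 :=
    hasFPowerSeriesAt_scalarSeries
      (Filter.eventually_of_mem (Metric.ball_mem_nhds (0:ℂ) one_pos) hu)
  have uan : AnalyticOnNhd ℂ u (ball (0:ℂ) 1) := by
    intro z hz
    by_cases hz0 : z = 0
    · subst hz0
      exact hqAt.analyticAt
    · have h1 : AnalyticAt ℂ (fun w => f w / w) z := (fan z hz).div analyticAt_id hz0
      refine h1.congr ?_
      filter_upwards [isOpen_compl_singleton.mem_nhds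
        (by simpa using hz0 : z ∈ ({0}ᶜ : Set ℂ))] with w hw
      simp only [Set.mem_compl_iff, Set.mem_singleton_iff] at hw
      simp [hu_def, hw]
  -- the function H = z f' / f, in the form deriv f / u
  set H : ℂ → ℂ := fun z => deriv f z / u z with hH_def
  have han : AnalyticOnNhd ℂ H (ball (0:ℂ) 1) := fun z hz =>
    ((fan.deriv z hz).div (uan z hz) (hune z hz))
  have hpAt : HasFPowerSeriesAt f (scalarSeries a) 0 :=
    hasFPowerSeriesAt_scalarSeries
      (Filter.eventually_of_mem (Metric.ball_mem_nhds (0:ℂ) one_pos) hf)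
  have hderiv0 : deriv f 0 = 1 := by
    have := hpAt.deriv
    simpa [scalarSeries, ha1] using this
  have hH0 : H 0 = 1 := by
    simp [hH_def, hu_def, hderiv0]
  have hre : ∀ z ∈ ball (0:ℂ) 1, β ≤ (H z).re := by
    intro z hz
    by_cases hz0 : z = 0
    · rw [hz0, hH0]
      simpa using hβ1
    · have h1 := hRef z hz hz0
      have h2 : z * deriv f z / f z = H z := by
        rw [hH_def]
        rw [hfu z hz, mul_div_mul_left _ _ hz0]
      rwa [h2] at h1
  -- power series of H at 0
  obtain ⟨c, hcAt⟩ := han 0 mem0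
  have hc0 : c.coeff 0 = 1 := by
    have h1 := hcAt.coeff_zero (fun _ => 1)
    rw [hH0] at h1
    exact h1
  -- power series of deriv f : coefficients (n+1) a (n+1)
  have hDseries : HasFPowerSeriesAt (deriv f)
      (scalarSeries (fun n => ((n:ℂ)+1) * a (n+1))) 0 := by
    apply hasFPowerSeriesAt_scalarSeries
    obtain ⟨ε, hεball⟩ := hpAt
    have hfd := hεball.fderiv
    filter_upwards [EMetric.ball_mem_nhds (0:ℂ) hεball.r_pos] with y hy
    by_cases hy0 : y = 0
    · subst hy0
      have h2 := hasSum_single (f := fun n : ℕ => ((n:ℂ)+1) * a (n+1) * (0:ℂ) ^ n) 0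
        (fun j hj => by simp [zero_pow hj])
      simpa [ha1, hderiv0] using h2
    · have hs := hfd.hasSum (by simpa using hy)
      have hs2 := (ContinuousLinearMap.apply ℂ ℂ y).hasSum hs
      simp only [ContinuousLinearMap.apply_apply] at hs2
      have hterm : ∀ n : ℕ, ((scalarSeries a).derivSeries n fun _ => y) y
          = (n+1 : ℕ) • (y ^ (n+1) • a (n+1)) := by
        intro n
        rw [FormalMultilinearSeries.derivSeries_apply_diag]
        congr 1
        rw [FormalMultilinearSeries.apply_eq_pow_smul_coeff, scalarSeries_coeff]
      rw [funext hterm] at hs2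
      have hval : (fderiv ℂ f (0 + y)) y = y * deriv f y := by
        rw [zero_add]
        calc (fderiv ℂ f y) y = (fderiv ℂ f y) (y • 1) := by simp
          _ = y • ((fderiv ℂ f y) 1) := (fderiv ℂ f y).map_smul y 1
          _ = y * deriv f y := by rw [smul_eq_mul, fderiv_apply_one_eq_deriv]
      rw [hval] at hs2
      have hs3 := hs2.mul_left y⁻¹
      have hfun : (fun n : ℕ => y⁻¹ * ((n+1 : ℕ) • (y ^ (n+1) • a (n+1))))
          = fun n : ℕ => ((n:ℂ)+1) * a (n+1) * y ^ n := by
        funext n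
        rw [nsmul_eq_mul, smul_eq_mul, pow_succ]
        push_cast
        field_simp
      rw [hfun] at hs3
      rwa [inv_mul_cancel_left₀ hy0] at hs3
  -- Cauchy product series for deriv f = H * u
  set e : ℕ → ℂ := fun n => ∑ k ∈ Finset.range (n+1), c.coeff k * a (n - k + 1) with he_def
  have hE : HasFPowerSeriesAt (deriv f) (scalarSeries e) 0 := by
    apply hasFPowerSeriesAt_scalarSeries
    have h1 := hasFPowerSeriesAt_iff.1 hcAt
    filter_upwards [h1, Metric.ball_mem_nhds (0:ℂ) one_pos] with y hy hyb
    have hFsum : HasSum (fun n => c.coeff n * y ^ n) (H y) := by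
      simpa [smul_eq_mul, mul_comm, zero_add] using hy
    have hGsum := hu y hyb
    have hFn : Summable fun n => ‖c.coeff n * y ^ n‖ := summable_norm_iff.2 hFsum.summable
    have hGn : Summable fun n => ‖a (n+1) * y ^ n‖ := summable_norm_iff.2 hGsum.summable
    have hprod := hasSum_sum_range_mul_of_summable_norm hFn hGn
    rw [hFsum.tsum_eq, hGsum.tsum_eq] at hprod
    have hHu : H y * u y = deriv f y := by
      rw [hH_def]
      exact div_mul_cancel₀ _ (hune y hyb)
    rw [hHu] at hprod
    have hfun : (fun n : ℕ => ∑ k ∈ Finset.range (n+1),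
        (c.coeff k * y ^ k) * (a (n - k + 1) * y ^ (n-k)))
        = fun n : ℕ => e n * y ^ n := by
      funext n
      rw [he_def, Finset.sum_mul]
      refine Finset.sum_congr rfl fun k hk => ?_
      have hk' : k ≤ n := Nat.lt_succ_iff.1 (Finset.mem_range.1 hk)
      have hyp : y ^ k * y ^ (n-k) = y ^ n := by
        rw [← pow_add, Nat.add_sub_cancel' hk']
      calc (c.coeff k * y ^ k) * (a (n - k + 1) * y ^ (n-k))
          = c.coeff k * a (n - k + 1) * (y ^ k * y ^ (n-k)) := by ring
        _ = c.coeff k * a (n - k + 1) * y ^ n := by rw [hyp]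
    rw [hfun] at hprod
    exact hprod
  -- uniqueness of power series coefficients
  have huniq := hDseries.eq_formalMultilinearSeries hE
  have hcoeffs : ∀ n : ℕ, ((n:ℂ)+1) * a (n+1) = e n := by
    intro n
    have h1 := congrArg (fun p : FormalMultilinearSeries ℂ ℂ ℂ => p.coeff n) huniq
    simpa using h1
  -- explicit low-order relations
  have E1 := hcoeffs 1
  have E2 := hcoeffs 2
  have E3 := hcoeffs 3
  simp only [he_def, Finset.sum_range_succ, Finset.sum_range_zero, zero_add] at E1 E2 E3
  norm_num [hc0, ha1] at E1 E2 E3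
  set c1 := c.coeff 1
  set c2 := c.coeff 2
  set c3 := c.coeff 3
  have ha2 : a 2 = c1 := by linear_combination E1
  have ha3 : a 3 = (c2 + c1^2)/2 := by linear_combination E2/2 + (c1/2) * ha2
  have ha4 : a 4 = (2*c3 + 3*c1*c2 + c1^3)/6 := by
    linear_combination E3/3 + (c1/3) * ha3 + (c2/3) * ha2
  have hid : a 2 * a 4 - a 3 ^ 2 = c1*c3/3 - c2^2/4 - c1^4/12 := by
    rw [ha2, ha3, ha4]
    ring
  -- coefficient bounds
  have hb1 : ‖c1‖ ≤ 2*(1-β) := coeff_bound β H c han hcAt hH0 hre 1 le_rfl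
  have hb2 : ‖c2‖ ≤ 2*(1-β) := coeff_bound β H c han hcAt hH0 hre 2 one_le_two
  have hb3 : ‖c3‖ ≤ 2*(1-β) := coeff_bound β H c han hcAt hH0 hre 3 (by norm_num)
  -- numeric conclusion
  have hsqrt : (5:ℝ) ≤ Real.sqrt 89 := by
    nlinarith [Real.sq_sqrt (by norm_num : (0:ℝ) ≤ 89), Real.sqrt_nonneg 89]
  have ht1 : 1 ≤ 2*(1-β) := by linarith
  have ht0 : 0 ≤ 2*(1-β) := by linarith
  have habs : ‖a 2 * a 4 - a 3 ^ 2‖ = ‖a 2 * a 4 - a 3 ^ 2‖ :=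
    rfl
  rw [habs, hid]
  have htr : ‖c1*c3/3 - c2^2/4 - c1^4/12‖ ≤ ‖c1‖*‖c3‖/3 + ‖c2‖^2/4 + ‖c1‖^4/12 := by
    calc ‖c1*c3/3 - c2^2/4 - c1^4/12‖
        ≤ ‖c1*c3/3 - c2^2/4‖ + ‖c1^4/12‖ := norm_sub_le _ _
      _ ≤ ‖c1*c3/3‖ + ‖c2^2/4‖ + ‖c1^4/12‖ := by
          have := norm_sub_le (c1*c3/3) (c2^2/4)
          linarith
      _ = ‖c1‖*‖c3‖/3 + ‖c2‖^2/4 + ‖c1‖^4/12 := by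
          rw [norm_div, norm_div, norm_div, norm_mul, norm_pow, norm_pow]
          norm_num
  refine htr.trans ?_
  have h13 : ‖c1‖*‖c3‖ ≤ (2*(1-β))*(2*(1-β)) := mul_le_mul hb1 hb3 (norm_nonneg _) ht0
  have h22 : ‖c2‖^2 ≤ (2*(1-β))^2 := pow_le_pow_left₀ (norm_nonneg _) hb2 2
  have h14 : ‖c1‖^4 ≤ (2*(1-β))^4 := pow_le_pow_left₀ (norm_nonneg _) hb1 4
  have ht2 : 1 ≤ (2*(1-β))^2 := by nlinarith only [ht1, ht0]
  have hkey : (2*(1-β))^2 ≤ (2*(1-β))^4 := by nlinarith only [ht2]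
  linarith only [h13, h22, h14, hkey]
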